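/- For all a>0 and ρ>0, the planar stationary slow-diffusion density integrates to one: e^{-a} + ∫_{‖x‖<ρ} (a/(2πρ)) · exp(−a + (a/ρ)√(ρ²−‖x‖²)) / √(ρ²−‖x‖²) dx = 1, where the integral is over the open disk of radius ρ in ℝ². -/

import Mathlib

open Real MeasureTheory

theorem stationary_density_2d_normalized (a ρ : ℝ) (ha : 0 < a) (hρ : 0 < ρ) :
    Real.exp (-a) +
      (∫ x in Metric.ball (0 : EuclideanSpace ℝ (Fin 2)) ρ,
        (a / (2 * π * ρ)) *
          Real.exp (-a + (a / ρ) * Real.sqrt (ρ ^ 2 - ‖x‖ ^ 2)) /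
            Real.sqrt (ρ ^ 2 - ‖x‖ ^ 2)) = 1 := by
  set g : ℝ → ℝ := fun r =>
    (a / (2 * π * ρ)) * Real.exp (-a + (a / ρ) * Real.sqrt (ρ ^ 2 - r ^ 2)) /
      Real.sqrt (ρ ^ 2 - r ^ 2) with hg
  have hgzero : ∀ r : ℝ, ρ ≤ r → g r = 0 := by
    intro r hr
    have h1 : ρ ^ 2 - r ^ 2 ≤ 0 := by nlinarith
    have h2 : Real.sqrt (ρ ^ 2 - r ^ 2) = 0 := Real.sqrt_eq_zero'.2 h1
    simp [hg, h2]
  -- Step A: extend to the whole space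
  have hA : (∫ x in Metric.ball (0 : EuclideanSpace ℝ (Fin 2)) ρ, g ‖x‖)
      = ∫ x : EuclideanSpace ℝ (Fin 2), g ‖x‖ := by
    apply setIntegral_eq_integral_of_forall_compl_eq_zero
    intro x hx
    simp only [Metric.mem_ball, dist_zero_right, not_lt] at hx
    exact hgzero _ hx
  -- Step B: polar coordinates
  have hdim : Module.finrank ℝ (EuclideanSpace ℝ (Fin 2)) = 2 := by
    simp [finrank_euclideanSpace]
  have hB := MeasureTheory.integral_fun_norm_addHaar
    (volume : Measure (EuclideanSpace ℝ (Fin 2))) g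
  rw [hdim] at hB
  have hball : (volume (Metric.ball (0 : EuclideanSpace ℝ (Fin 2)) 1)).toReal = π := by
    rw [EuclideanSpace.volume_ball]
    have : ((Fintype.card (Fin 2) : ℝ) / 2 + 1) = 2 := by norm_num
    rw [Fintype.card_fin] at this ⊢
    rw [this, Real.Gamma_two]
    rw [Real.sq_sqrt Real.pi_pos.le]
    simp [ENNReal.toReal_ofReal Real.pi_pos.le]
  -- Step C: restrict radial integral to (0, ρ]
  have hC : (∫ y in Set.Ioi (0 : ℝ), y ^ (2 - 1) • g y)
      = ∫ y in Set.Ioc (0 : ℝ) ρ, y * g y := by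
    have := setIntegral_eq_of_subset_of_forall_diff_eq_zero
      (measurableSet_Ioi (a := (0:ℝ))) (Set.Ioc_subset_Ioi_self : Set.Ioc (0:ℝ) ρ ⊆ Set.Ioi 0)
      (f := fun y => y * g y) (μ := volume) ?_
    · simpa [pow_one] using this
    · intro y hy
      obtain ⟨hy1, hy2⟩ := hy
      have : ρ ≤ y := by
        by_contra h
        exact hy2 ⟨hy1, le_of_lt (not_le.1 h)⟩
      show y * g y = 0
      rw [hgzero y this, mul_zero]
  -- Step D: FTC on (0, ρ)
  set F : ℝ → ℝ := fun y => -(1 / (2 * π)) * Real.exp (-a + (a / ρ) * Real.sqrt (ρ ^ 2 - y ^ 2))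
    with hF
  have hFcont : ContinuousOn F (Set.Icc 0 ρ) := by
    apply Continuous.continuousOn
    fun_prop
  have hFderiv : ∀ y ∈ Set.Ioo (0 : ℝ) ρ, HasDerivAt F (y * g y) y := by
    intro y hy
    obtain ⟨hy0, hyρ⟩ := hy
    have hs2 : 0 < ρ ^ 2 - y ^ 2 := by nlinarith
    have hs : 0 < Real.sqrt (ρ ^ 2 - y ^ 2) := Real.sqrt_pos.2 hs2
    have h1 : HasDerivAt (fun t : ℝ => ρ ^ 2 - t ^ 2) (-(2 * y)) y := by
      simpa using ((hasDerivAt_pow 2 y).const_sub (ρ ^ 2))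
    have h2 : HasDerivAt (fun t : ℝ => Real.sqrt (ρ ^ 2 - t ^ 2))
        (1 / (2 * Real.sqrt (ρ ^ 2 - y ^ 2)) * (-(2 * y))) y :=
      (Real.hasDerivAt_sqrt hs2.ne').comp y h1
    have h3 : HasDerivAt (fun t : ℝ => -a + (a / ρ) * Real.sqrt (ρ ^ 2 - t ^ 2))
        ((a / ρ) * (1 / (2 * Real.sqrt (ρ ^ 2 - y ^ 2)) * (-(2 * y)))) y :=
      (h2.const_mul (a / ρ)).const_add (-a)
    have h4 := (Real.hasDerivAt_exp _).comp y h3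
    have h5 := h4.const_mul (-(1 / (2 * π)))
    refine h5.congr_deriv ?_
    rw [hg]
    field_simp
  have hnonneg : ∀ y ∈ Set.Ioo (0 : ℝ) ρ, 0 ≤ y * g y := by
    intro y hy
    obtain ⟨hy0, hyρ⟩ := hy
    rw [hg]
    have h2π : 0 < 2 * π * ρ := by positivity
    have : 0 ≤ Real.sqrt (ρ ^ 2 - y ^ 2) := Real.sqrt_nonneg _
    positivity
  have hint : IntegrableOn (fun y => y * g y) (Set.Ioc 0 ρ) volume :=
    intervalIntegral.integrableOn_deriv_of_nonneg hFcont hFderiv hnonneg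
  have hD : ∫ y in Set.Ioc (0 : ℝ) ρ, y * g y = F ρ - F 0 := by
    rw [← intervalIntegral.integral_of_le hρ.le]
    exact intervalIntegral.integral_eq_sub_of_hasDerivAt_of_le hρ.le hFcont hFderiv
      ((intervalIntegrable_iff_integrableOn_Ioc_of_le hρ.le).2 hint)
  have hFρ : F ρ = -(1 / (2 * π)) * Real.exp (-a) := by
    simp [hF]
  have hF0 : F 0 = -(1 / (2 * π)) := by
    have : Real.sqrt (ρ ^ 2 - (0:ℝ) ^ 2) = ρ := by
      norm_num [Real.sqrt_sq hρ.le]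
    rw [hF]
    simp only [this]
    rw [div_mul_cancel₀ _ hρ.ne']
    simp
  -- Put everything together
  have key : (∫ x in Metric.ball (0 : EuclideanSpace ℝ (Fin 2)) ρ, g ‖x‖)
      = 1 - Real.exp (-a) := by
    rw [hA, hB, measureReal_def, hball, hC, hD, hFρ, hF0]
    have hπ : (π : ℝ) ≠ 0 := Real.pi_ne_zero
    simp only [smul_eq_mul, nsmul_eq_mul, Nat.cast_ofNat]
    field_simp
    ring
  calc Real.exp (-a) + (∫ x in Metric.ball (0 : EuclideanSpace ℝ (Fin 2)) ρ,
        (a / (2 * π * ρ)) * Real.exp (-a + (a / ρ) * Real.sqrt (ρ ^ 2 - ‖x‖ ^ 2)) /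
          Real.sqrt (ρ ^ 2 - ‖x‖ ^ 2))
      = Real.exp (-a) + (∫ x in Metric.ball (0 : EuclideanSpace ℝ (Fin 2)) ρ, g ‖x‖) := rfl
    _ = Real.exp (-a) + (1 - Real.exp (-a)) := by rw [key]
    _ = 1 := by ring
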